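/- Let Φ = {φ_i(x) = ρ x + a_i}_{i∈Γ} be an equicontractive homothetic self-similar IFS on ℝ^d satisfying the weak separation condition, with 𝚊₀ attaining the maximal neighbourhood system 𝒩₀ = 𝒩(𝚊₀), and suppose for some h₁ ∈ 𝒩₀ that K_{𝚊₀} ∩ h₁(K) ≠ ∅. Then there exist finite words 𝚋, 𝚌 ∈ Γ* with φ_𝚋 = h₁ ∘ φ_𝚌, i.e. a descendant of h₁(K) overlaps exactly with a cylinder of K. -/
import Mathlib


open Metric

/-- Composition `φ_𝚊` along a finite word. -/
def wordMap {Γ α : Type*} (φ : Γ → α → α) : List Γ → α → α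
  | [] => id
  | i :: a => φ i ∘ wordMap φ a

/-- Equicontractive neighbourhood system
`𝒩(𝚊) = { φ_𝚊⁻¹ ∘ φ_𝚋 : 𝚋 ∈ Γ^{|𝚊|}, K_𝚋 ∩ B_𝚊 ≠ ∅ }`. -/
def nbhdE {Γ : Type*} {d : ℕ}
    (φ : Γ → EuclideanSpace ℝ (Fin d) → EuclideanSpace ℝ (Fin d))
    (K : Set (EuclideanSpace ℝ (Fin d))) (a : List Γ) :
    Set (EuclideanSpace ℝ (Fin d) → EuclideanSpace ℝ (Fin d)) :=
  {f | ∃ b : List Γ, b.length = a.length ∧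
    (wordMap φ b '' K ∩ wordMap φ a '' closedBall 0 1).Nonempty ∧
    wordMap φ a ∘ f = wordMap φ b}

theorem wordMap_append {Γ α : Type*} (φ : Γ → α → α) (u v : List Γ) :
    wordMap φ (u ++ v) = wordMap φ u ∘ wordMap φ v := by
  induction u with
  | nil => rfl
  | cons i u ih => simp [wordMap, ih, Function.comp_assoc]

/-- **Exact overlap of a descendant of a neighbour.** For an equicontractive
homothetic IFS with the weak separation condition (with `𝚊₀` attaining the
maximal neighbourhood system `𝒩₀`), if `h₁ ∈ 𝒩₀` satisfies
`K_{𝚊₀} ∩ h₁(K) ≠ ∅`, then there are words `𝚋, 𝚌` with `φ_𝚋 = h₁ ∘ φ_𝚌`. -/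
theorem stmt9 {Γ : Type*} [Fintype Γ] [Nonempty Γ] {d : ℕ}
    (ρ : ℝ) (hρ : ρ ∈ Set.Ioo (0 : ℝ) 1) (a : Γ → EuclideanSpace ℝ (Fin d))
    (φ : Γ → EuclideanSpace ℝ (Fin d) → EuclideanSpace ℝ (Fin d))
    (hφ : ∀ i x, φ i x = ρ • x + a i)
    (K : Set (EuclideanSpace ℝ (Fin d))) (hKc : IsCompact K) (hKne : K.Nonempty)
    (hattr : K = ⋃ i, φ i '' K) (hKball : K ⊆ closedBall 0 1)
    (hfin : ∀ w : List Γ, (nbhdE φ K w).Finite)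
    (a₀ : List Γ) (hmax : ∀ w : List Γ, (nbhdE φ K w).ncard ≤ (nbhdE φ K a₀).ncard)
    (h₁ : EuclideanSpace ℝ (Fin d) → EuclideanSpace ℝ (Fin d))
    (hh₁ : h₁ ∈ nbhdE φ K a₀)
    (hover : (wordMap φ a₀ '' K ∩ h₁ '' K).Nonempty) :
    ∃ b c : List Γ, wordMap φ b = h₁ ∘ wordMap φ c := by
  obtain ⟨hρ0, hρ1⟩ := hρ
  -- each map of the IFS is bijective
  have hbijφ : ∀ i : Γ, Function.Bijective (φ i) := by
    intro i
    constructor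
    · intro x y hxy
      rw [hφ, hφ] at hxy
      exact smul_right_injective _ (ne_of_gt hρ0) (add_right_cancel hxy)
    · intro y
      refine ⟨ρ⁻¹ • (y - a i), ?_⟩
      rw [hφ, smul_smul, mul_inv_cancel₀ (ne_of_gt hρ0), one_smul, sub_add_cancel]
  have hbij : ∀ w : List Γ, Function.Bijective (wordMap φ w) := by
    intro w
    induction w with
    | nil => exact Function.bijective_id
    | cons i w ih => exact (hbijφ i).comp ih
  -- covering of K by cylinders of any depth
  have hcover : ∀ n : ℕ, ∀ x ∈ K, ∃ c : List Γ, c.length = n ∧ x ∈ wordMap φ c '' K := by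
    intro n
    induction n with
    | zero => intro x hx; exact ⟨[], rfl, ⟨x, hx, rfl⟩⟩
    | succ n ih =>
      intro x hx
      have hx' : x ∈ ⋃ i, φ i '' K := hattr ▸ hx
      obtain ⟨i, x', hx', hxe⟩ := by simpa using hx'
      obtain ⟨c, hc, x'', hx'', he⟩ := ih x' hx'
      refine ⟨i :: c, by simp [hc], x'', hx'', ?_⟩
      show φ i (wordMap φ c x'') = x
      rw [he, hxe]
  obtain ⟨b₁, hb₁len, hb₁ne, hb₁eq⟩ := hh₁
  obtain ⟨x, hxa, hxh⟩ := hover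
  obtain ⟨z, hz, hz'⟩ := hxa
  obtain ⟨y, hy, hy'⟩ := hxh
  obtain ⟨c, hclen, w, hw, hweq⟩ := hcover a₀.length y hy
  set g := wordMap φ a₀ with hg
  have gsurj : Function.Surjective g := (hbij a₀).2
  set gi := Function.invFun g with hgidef
  have hgri : ∀ t, g (gi t) = t := fun t => Function.rightInverse_invFun gsurj t
  set h₂ := gi ∘ h₁ ∘ wordMap φ c with hh₂
  -- h₂ is a neighbour map of a₀ ++ a₀
  have key3 : wordMap φ (a₀ ++ a₀) ∘ h₂ = wordMap φ (b₁ ++ c) := by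
    funext t
    show wordMap φ (a₀ ++ a₀) (h₂ t) = wordMap φ (b₁ ++ c) t
    rw [wordMap_append, wordMap_append]
    show g (g (gi (h₁ (wordMap φ c t)))) = wordMap φ b₁ (wordMap φ c t)
    rw [hgri]
    exact congrFun hb₁eq (wordMap φ c t)
  have hmem2 : h₂ ∈ nbhdE φ K (a₀ ++ a₀) := by
    refine ⟨b₁ ++ c, by simp [hb₁len, hclen], ⟨g x, ⟨w, hw, ?_⟩, ⟨z, hKball hz, ?_⟩⟩, key3⟩
    · show wordMap φ (b₁ ++ c) w = g x
      rw [wordMap_append]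
      show wordMap φ b₁ (wordMap φ c w) = g x
      rw [hweq]
      have := congrFun hb₁eq y
      simp only [Function.comp_apply] at this
      rw [← this, hy']
    · show wordMap φ (a₀ ++ a₀) z = g x
      rw [wordMap_append]
      show g (g z) = g x
      rw [hz']
  -- maximality: 𝒩(a₀ ++ a₀) = 𝒩₀
  have hsub : nbhdE φ K a₀ ⊆ nbhdE φ K (a₀ ++ a₀) := by
    rintro h ⟨e, helen, ⟨p, hp1, hp2⟩, heeq⟩
    refine ⟨a₀ ++ e, by simp [helen], ⟨g p, ?_, ?_⟩, ?_⟩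
    · obtain ⟨q, hq, hq'⟩ := hp1
      refine ⟨q, hq, ?_⟩
      rw [wordMap_append]
      show g (wordMap φ e q) = g p
      rw [hq']
    · obtain ⟨q, hq, hq'⟩ := hp2
      refine ⟨q, hq, ?_⟩
      rw [wordMap_append]
      exact congrArg g hq' 
    · rw [wordMap_append]
      funext t
      show g (g (h t)) = wordMap φ (a₀ ++ e) t
      rw [wordMap_append]
      show g (g (h t)) = g (wordMap φ e t)
      rw [show g (h t) = wordMap φ e t from congrFun heeq t]
  have heq : nbhdE φ K a₀ = nbhdE φ K (a₀ ++ a₀) :=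
    Set.eq_of_subset_of_ncard_le hsub (hmax _) (hfin _)
  rw [← heq] at hmem2
  obtain ⟨b₂, _, _, hb₂⟩ := hmem2
  refine ⟨b₂, c, ?_⟩
  funext t
  have h1 := congrFun hb₂ t
  simp only [Function.comp_apply] at h1 ⊢
  rw [← h1]
  show g (gi (h₁ (wordMap φ c t))) = h₁ (wordMap φ c t)
  exact hgri _
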